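/- Let F be a finite field with q elements, let 2 ≤ t < v be integers, and let 𝒫 be a vector space partition of F^v such that every member of 𝒫 has dimension between 1 and t. Then the set of 1-dimensional members of 𝒫 is a q-divisible set of points of PG(v−1, q); that is, for every hyperplane H of F^v, the number of 1-dimensional members of 𝒫 contained in H is congruent modulo q to the total number of 1-dimensional members of 𝒫. -/

import Mathlib

open scoped Classical

section PGDefs

variable {F : Type} [Field F] {M : Type} [AddCommGroup M] [Module F M]

/-- The number of points of `C` contained in the subspace `S`, i.e. `|C ∩ S|`. -/
noncomputable def interCard (C : Finset (Submodule F M)) (S : Submodule F M) : ℕ :=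
  (C.filter (fun P => P ≤ S)).card

/-- `H` is a hyperplane, i.e. a subspace of codimension 1. -/
def IsHyperplane (H : Submodule F M) : Prop :=
  Module.finrank F ↥H = Module.finrank F M - 1

/-- Every element of `C` is a point, i.e. a 1-dimensional subspace. -/
def IsPointSet (C : Finset (Submodule F M)) : Prop :=
  ∀ P ∈ C, Module.finrank F ↥P = 1

/-- `C` is `Δ`-divisible: `|C ∩ H| ≡ |C| (mod Δ)` for every hyperplane `H`. -/
def DivisibleSet (Δ : ℕ) (C : Finset (Submodule F M)) : Prop :=
  ∀ H : Submodule F M, IsHyperplane H → interCard C H ≡ C.card [MOD Δ]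

noncomputable instance fintypeSubmodule [Finite M] : Fintype (Submodule F M) :=
  have : Finite (Submodule F M) :=
    Finite.of_injective (fun S => (S : Set M)) SetLike.coe_injective
  Fintype.ofFinite _

end PGDefs

/-- The number of nonzero vectors in a submodule of `F^v` is `q ^ dim - 1`. -/
private lemma card_nonzero_vectors (F : Type) [Field F] [Fintype F] {v : ℕ}
    (N : Submodule F (Fin v → F)) :
    (Finset.univ.filter fun x : Fin v → F => x ∈ N ∧ x ≠ 0).card
      = Fintype.card F ^ Module.finrank F ↥N - 1 := by
  have h1 : (Finset.univ.filter fun x : Fin v → F => x ∈ N ∧ x ≠ 0)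
      = (Finset.univ.filter fun x : Fin v → F => x ∈ N).erase 0 := by
    ext x
    simp [Finset.mem_erase, and_comm]
  rw [h1, Finset.card_erase_of_mem (by simp [N.zero_mem])]
  congr 1
  rw [← Fintype.card_subtype, ← Module.card_eq_pow_finrank (K := F) (V := ↥N)]

/-- Partition counting: the nonzero vectors of any subspace `S` are partitioned
by the pieces `S ⊓ W`, `W ∈ P`. -/
private lemma count_partition (F : Type) [Field F] [Fintype F] {v : ℕ}
    (P : Finset (Submodule F (Fin v → F)))
    (hpart : ∀ x : Fin v → F, x ≠ 0 → ∃! W, W ∈ P ∧ x ∈ W)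
    (S : Submodule F (Fin v → F)) :
    (Finset.univ.filter fun x : Fin v → F => x ∈ S ∧ x ≠ 0).card
      = ∑ W ∈ P, (Finset.univ.filter fun x : Fin v → F => x ∈ S ⊓ W ∧ x ≠ 0).card := by
  rw [← Finset.card_biUnion]
  · congr 1
    ext x
    simp only [Finset.mem_biUnion, Finset.mem_filter, Finset.mem_univ, true_and,
      Submodule.mem_inf]
    constructor
    · rintro ⟨hxS, hx0⟩
      obtain ⟨W, ⟨hW, hxW⟩, -⟩ := hpart x hx0
      exact ⟨W, hW, ⟨hxS, hxW⟩, hx0⟩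
    · rintro ⟨W, hW, ⟨hxS, hxW⟩, hx0⟩
      exact ⟨hxS, hx0⟩
  · intro W1 h1 W2 h2 hne
    rw [Function.onFun, Finset.disjoint_left]
    intro x hx1 hx2
    simp only [Finset.mem_filter, Finset.mem_univ, true_and, Submodule.mem_inf] at hx1 hx2
    obtain ⟨⟨hxS, hxW1⟩, hx0⟩ := hx1
    obtain ⟨⟨-, hxW2⟩, -⟩ := hx2
    obtain ⟨W, -, huniq⟩ := hpart x hx0
    exact hne ((huniq W1 ⟨h1, hxW1⟩).trans (huniq W2 ⟨h2, hxW2⟩).symm)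

/-- Lemma 3.2: in a vector space partition all of whose members have dimension between
1 and `t` (with `2 ≤ t < v`), the 1-dimensional members form a `q`-divisible set of
points. -/
theorem vsp_holes_q_divisible (F : Type) [Field F] [Fintype F] (q v t : ℕ)
    (hq : Fintype.card F = q) (ht : 2 ≤ t) (htv : t < v)
    (P : Finset (Submodule F (Fin v → F)))
    (hnz : ∀ W ∈ P, W ≠ ⊥)
    (hpart : ∀ x : Fin v → F, x ≠ 0 → ∃! W, W ∈ P ∧ x ∈ W)
    (hdim : ∀ W ∈ P, 1 ≤ Module.finrank F ↥W ∧ Module.finrank F ↥W ≤ t) :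
    DivisibleSet q (P.filter (fun W => Module.finrank F ↥W = 1)) := by
  intro H hH
  have hq0 : 0 < q := hq ▸ Fintype.card_pos
  have hv : Module.finrank F (Fin v → F) = v := Module.finrank_fin_fun F
  have key : ∀ S : Submodule F (Fin v → F),
      ((q ^ Module.finrank F ↥S - 1 : ℕ) : ZMod q)
        = ∑ W ∈ P, ((q ^ Module.finrank F ↥(S ⊓ W) - 1 : ℕ) : ZMod q) := by
    intro S
    have hnat := count_partition F P hpart S
    simp only [card_nonzero_vectors, hq] at hnat
    rw [← Nat.cast_sum]
    exact_mod_cast congrArg (Nat.cast : ℕ → ZMod q) hnat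
  have hterm : ∀ d : ℕ, ((q ^ d - 1 : ℕ) : ZMod q) = if d = 0 then 0 else -1 := by
    intro d
    cases d with
    | zero => simp
    | succ n =>
      rw [Nat.cast_sub (Nat.one_le_pow _ _ hq0), Nat.cast_pow, ZMod.natCast_self,
        zero_pow (Nat.succ_ne_zero n)]
      simp
  -- applying with S = ⊤ : |P| ≡ 1 (mod q)
  have htop : (P.card : ZMod q) = 1 := by
    have h := key ⊤
    have h1 : ∀ W ∈ P, ((q ^ Module.finrank F ↥((⊤ : Submodule F (Fin v → F)) ⊓ W) - 1 : ℕ)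
        : ZMod q) = -1 := by
      intro W hW
      rw [top_inf_eq, hterm, if_neg]
      have := (hdim W hW).1; omega
    rw [Finset.sum_congr rfl h1, Finset.sum_const, nsmul_eq_mul, mul_neg_one, hterm,
      finrank_top, hv, if_neg (by omega)] at h
    linear_combination h
  -- now work with the hyperplane H
  have hHv : Module.finrank F ↥H = v - 1 := by rw [hH, hv]
  have hkeyH := key H
  rw [hterm, hHv, if_neg (by omega)] at hkeyH
  have h2 : ∀ W ∈ P, ((q ^ Module.finrank F ↥(H ⊓ W) - 1 : ℕ) : ZMod q)
      = if Module.finrank F ↥(H ⊓ W) = 0 then 0 else -1 := fun W _ => hterm _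
  rw [Finset.sum_congr rfl h2,
    ← Finset.sum_filter_add_sum_filter_not P (fun W : Submodule F (Fin v → F) => Module.finrank F ↥W = 1)] at hkeyH
  -- every member of the non-1-dimensional part meets H nontrivially
  have hDsum : ∑ W ∈ P.filter (fun W : Submodule F (Fin v → F) => ¬ Module.finrank F ↥W = 1),
      (if Module.finrank F ↥(H ⊓ W) = 0 then (0 : ZMod q) else -1)
      = -((P.filter (fun W : Submodule F (Fin v → F) => ¬ Module.finrank F ↥W = 1)).card : ZMod q) := by
    have h1 : ∀ W ∈ P.filter (fun W : Submodule F (Fin v → F) => ¬ Module.finrank F ↥W = 1),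
        (if Module.finrank F ↥(H ⊓ W) = 0 then (0 : ZMod q) else -1) = -1 := by
      intro W hW
      rw [Finset.mem_filter] at hW
      obtain ⟨hWP, hW1⟩ := hW
      have hge2 : 2 ≤ Module.finrank F ↥W := by have := (hdim W hWP).1; omega
      have hdimeq := Submodule.finrank_sup_add_finrank_inf_eq H W
      have hle : Module.finrank F ↥(H ⊔ W) ≤ v :=
        le_trans (Submodule.finrank_le _) hv.le
      rw [if_neg (by omega)]
    rw [Finset.sum_congr rfl h1, Finset.sum_const, nsmul_eq_mul, mul_neg_one]
  -- a 1-dimensional member meets H nontrivially iff it lies in H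
  have hCsum : ∑ W ∈ P.filter (fun W : Submodule F (Fin v → F) => Module.finrank F ↥W = 1),
      (if Module.finrank F ↥(H ⊓ W) = 0 then (0 : ZMod q) else -1)
      = -((interCard (P.filter (fun W : Submodule F (Fin v → F) => Module.finrank F ↥W = 1)) H : ℕ) : ZMod q) := by
    have h1 : ∀ W ∈ P.filter (fun W : Submodule F (Fin v → F) => Module.finrank F ↥W = 1),
        (if Module.finrank F ↥(H ⊓ W) = 0 then (0 : ZMod q) else -1)
        = if W ≤ H then -1 else 0 := by
      intro W hW
      rw [Finset.mem_filter] at hW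
      obtain ⟨hWP, hW1⟩ := hW
      by_cases hWH : W ≤ H
      · rw [if_pos hWH, if_neg]
        rw [inf_eq_right.mpr hWH, hW1]
        omega
      · rw [if_neg hWH, if_pos]
        by_contra h0
        have hle1 : Module.finrank F ↥W ≤ Module.finrank F ↥(H ⊓ W) := by omega
        have heq := Submodule.eq_of_le_of_finrank_le inf_le_right hle1
        exact hWH (heq ▸ inf_le_left)
    rw [Finset.sum_congr rfl h1, Finset.sum_ite, Finset.sum_const, Finset.sum_const]
    simp only [nsmul_eq_mul, mul_neg_one, mul_zero, smul_zero, add_zero]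
    rw [interCard]
  rw [hDsum, hCsum] at hkeyH
  have hPcard : (P.filter (fun W : Submodule F (Fin v → F) => Module.finrank F ↥W = 1)).card
      + (P.filter (fun W : Submodule F (Fin v → F) => ¬ Module.finrank F ↥W = 1)).card = P.card :=
    Finset.card_filter_add_card_filter_not _
  have hcast : ((interCard (P.filter (fun W : Submodule F (Fin v → F) => Module.finrank F ↥W = 1)) H : ℕ) : ZMod q)
      = (((P.filter (fun W : Submodule F (Fin v → F) => Module.finrank F ↥W = 1)).card : ℕ) : ZMod q) := by
    have hsum : (((P.filter (fun W : Submodule F (Fin v → F) => Module.finrank F ↥W = 1)).card : ℕ) : ZMod q)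
        + (((P.filter (fun W : Submodule F (Fin v → F) => ¬ Module.finrank F ↥W = 1)).card : ℕ) : ZMod q) = 1 := by
      rw [← Nat.cast_add, hPcard, htop]
    linear_combination hkeyH - hsum
  exact (ZMod.natCast_eq_natCast_iff _ _ _).mp hcast
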